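/- Let w ∈ S_n with ℓ(w) > 0, let k₀ be the smallest index with γ_{k₀}(w) ≠ 0 in the Lehmer code of w, and let j₀ > k₀ be the unique index with w(k₀) = w(j₀) + 1. Set v = w t_{k₀,j₀} and v′ = v t_{k₀−1,k₀}. Then ℓ(v) = ℓ(w) − 1, ℓ(v′) = ℓ(w), v′ is the unique permutation of the form v t_{j,k₀} with j < k₀ and ℓ(v t_{j,k₀}) = ℓ(v) + 1, and moreover every permutation w′ = v t_{k₀,j} with j > k₀, j ≠ j₀ and ℓ(w′) = ℓ(v) + 1 satisfies w′(k₀) > w(k₀), hence γ_{k₀}(w′) > γ_{k₀}(w) while γ_i(w′) = γ_i(w) = 0 for i < k₀. -/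

import Mathlib

open Finset

/-- The Lehmer code of a permutation: `pcode w k = #{j > k : w j < w k}`. -/
def pcode {n : ℕ} (w : Equiv.Perm (Fin n)) (i : Fin n) : ℕ :=
  (Finset.univ.filter fun j => i < j ∧ w j < w i).card

/-- The Coxeter length of a permutation: its number of inversions. -/
def plen {n : ℕ} (w : Equiv.Perm (Fin n)) : ℕ :=
  (Finset.univ.filter fun p : Fin n × Fin n => p.1 < p.2 ∧ w p.2 < w p.1).card



lemma pcode_zero_iff {n : ℕ} (w : Equiv.Perm (Fin n)) (i : Fin n) :
    pcode w i = 0 ↔ ∀ j : Fin n, i < j → ¬ w j < w i := by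
  unfold pcode
  rw [Finset.card_eq_zero, Finset.filter_eq_empty_iff]
  simp only [mem_univ, true_implies, not_and]

lemma fix_below {n : ℕ} (w : Equiv.Perm (Fin n)) (k : Fin n)
    (h0 : ∀ i : Fin n, i < k → pcode w i = 0) : ∀ i : Fin n, i < k → w i = i := by
  suffices H : ∀ m : ℕ, ∀ i : Fin n, (i : ℕ) = m → i < k → w i = i by
    exact fun i hi => H i.val i rfl hi
  intro m
  induction m using Nat.strong_induction_on with
  | _ m IH =>
    intro i him hik
    subst him
    -- lower bound: (i:ℕ) ≤ w i
    have hge : (i : ℕ) ≤ (w i : ℕ) := by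
      by_contra hlt
      push_neg at hlt
      have h1 : w (w i) = w i := IH (w i : ℕ) hlt (w i) rfl (lt_trans (by exact hlt) hik)
      have := w.injective h1
      rw [this] at hlt
      omega
    rcases eq_or_lt_of_le hge with heq | hlt
    · exact Fin.ext heq.symm
    · exfalso
      set p := w.symm i with hp
      have hwp : w p = i := w.apply_symm_apply i
      have hpi : p ≠ i := by
        intro h; rw [h] at hwp
        have := congrArg Fin.val hwp; omega
      have hip : i < p := by
        rcases lt_or_gt_of_ne hpi with h | h
        · exfalso
          have := IH (p : ℕ) h p rfl (lt_trans h hik)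
          exact absurd (this.symm.trans hwp) (ne_of_lt h)
        · exact h
      have := (pcode_zero_iff w i).1 (h0 i hik) p hip
      rw [hwp] at this
      exact this hlt


lemma card_filter_lt' {n : ℕ} (t : Fin n) :
    (univ.filter fun j : Fin n => j < t).card = t.val := by
  rw [show (univ.filter fun j : Fin n => j < t) = Finset.Iio t by ext j; simp]
  exact Fin.card_Iio t

lemma card_filter_apply_lt {n : ℕ} (w : Equiv.Perm (Fin n)) (t : Fin n) :
    (univ.filter fun j : Fin n => w j < t).card = t.val := by
  rw [← card_filter_lt' t]
  apply Finset.card_bij (fun j _ => w j)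
  · intro a ha; simp_all
  · intro a ha b hb h; exact w.injective h
  · intro b hb; exact ⟨w.symm b, by simp_all, by simp⟩

lemma pcode_of_fix {n : ℕ} (w : Equiv.Perm (Fin n)) (k : Fin n)
    (hfix : ∀ i : Fin n, i < k → w i = i) : (w k : ℕ) = (k : ℕ) + pcode w k := by
  have key : ∀ j : Fin n, j < k → w j < w k ∧ w j = j := by
    intro j hj
    have h1 := hfix j hj
    constructor
    · rw [h1]
      -- j < w k : since (w k) ≥ k
      have : (k : ℕ) ≤ (w k : ℕ) := by
        by_contra hlt
        push_neg at hlt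
        have h2 : w (w k) = w k := hfix (w k) (by exact hlt)
        have := congrArg Fin.val (w.injective h2)
        omega
      exact lt_of_lt_of_le hj (by rw [Fin.le_def]; exact this)
    · exact h1
  have hsplit := Finset.card_filter_add_card_filter_not
    (s := univ.filter fun j : Fin n => w j < w k) (p := fun j => j < k)
  have e1 : (univ.filter fun j : Fin n => w j < w k).filter (fun j => j < k)
      = univ.filter fun j : Fin n => j < k := by
    ext j
    simp only [mem_filter, mem_univ, true_and]
    exact ⟨fun h => h.2, fun h => ⟨(key j h).1, h⟩⟩
  have e2 : (univ.filter fun j : Fin n => w j < w k).filter (fun j => ¬ j < k)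
      = univ.filter fun j : Fin n => k < j ∧ w j < w k := by
    ext j
    simp only [mem_filter, mem_univ, true_and]
    constructor
    · rintro ⟨h1, h2⟩
      have : j ≠ k := by rintro rfl; exact absurd h1 (lt_irrefl _)
      exact ⟨lt_of_le_of_ne (not_lt.1 h2) (Ne.symm this), h1⟩
    · rintro ⟨h1, h2⟩; exact ⟨h2, not_lt.2 (le_of_lt h1)⟩
  rw [e1, e2] at hsplit
  rw [card_filter_apply_lt w (w k), card_filter_lt'] at hsplit
  unfold pcode
  omega

lemma pcode_zero_of_fix {n : ℕ} (w : Equiv.Perm (Fin n)) (k : Fin n)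
    (hfix : ∀ i : Fin n, i < k → w i = i) (i : Fin n) (hi : i < k) : pcode w i = 0 := by
  unfold pcode
  rw [Finset.card_eq_zero, Finset.filter_eq_empty_iff]
  intro j _
  rintro ⟨h1, h2⟩
  rw [hfix i hi] at h2
  by_cases hj : j < k
  · rw [hfix j hj] at h2; exact absurd h1 (not_lt.2 (le_of_lt h2))
  · have hwjk : w j < k := lt_trans h2 hi
    have h3 : w (w j) = w j := hfix (w j) hwjk
    have h4 := w.injective h3
    exact hj (by rw [← h4]; exact hwjk)


def invS {n : ℕ} (w : Equiv.Perm (Fin n)) : Finset (Fin n × Fin n) :=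
  Finset.univ.filter fun p : Fin n × Fin n => p.1 < p.2 ∧ w p.2 < w p.1

lemma plen_eq {n : ℕ} (w : Equiv.Perm (Fin n)) : plen w = (invS w).card := rfl

lemma mem_invS {n : ℕ} (w : Equiv.Perm (Fin n)) (p : Fin n × Fin n) :
    p ∈ invS w ↔ p.1 < p.2 ∧ w p.2 < w p.1 := by simp [invS]

def psi {n : ℕ} (s : Equiv.Perm (Fin n)) (p : Fin n × Fin n) : Fin n × Fin n :=
  if s p.1 < s p.2 then (s p.1, s p.2) else p

lemma psi_inj {n : ℕ} (s : Equiv.Perm (Fin n)) (hs : ∀ x, s (s x) = x)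
    {p q : Fin n × Fin n}
    (hp : p.1 < p.2) (hq : q.1 < q.2) (h : psi s p = psi s q) : p = q := by
  unfold psi at h
  split_ifs at h with h1 h2 h2
  · have e1 : s p.1 = s q.1 := congrArg Prod.fst h
    have e2 : s p.2 = s q.2 := congrArg Prod.snd h
    exact Prod.ext (s.injective e1) (s.injective e2)
  · -- (s p.1, s p.2) = q, h1 : s p.1 < s p.2, h2 : ¬ s q.1 < s q.2
    exfalso
    apply h2
    rw [← h]
    simp [hs, hp]
  · exfalso
    apply h1
    rw [h]
    simp [hs, hq]
  · exact h

lemma psi_maps_asc {n : ℕ} (a b : Fin n) (hab : a < b) (w : Equiv.Perm (Fin n))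
    (hw : w a < w b) {p : Fin n × Fin n} (hp : p ∈ invS w) :
    psi (Equiv.swap a b) p ∈ invS (w * Equiv.swap a b) := by
  obtain ⟨x, y⟩ := p
  rw [mem_invS] at hp
  obtain ⟨hxy, hinv⟩ := hp
  have hss : ∀ z, Equiv.swap a b (Equiv.swap a b z) = z :=
    fun z => Equiv.swap_apply_self a b z
  unfold psi
  split_ifs with h1
  · rw [mem_invS]
    refine ⟨h1, ?_⟩
    simp only [Equiv.Perm.mul_apply, hss]
    exact hinv
  · rw [mem_invS]
    refine ⟨hxy, ?_⟩
    simp only [Equiv.Perm.mul_apply]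
    by_cases hxa : x = a
    · obtain rfl := hxa.symm
      by_cases hyb : y = b
      · obtain rfl := hyb.symm
        rw [Equiv.swap_apply_left, Equiv.swap_apply_right]
        exact hw
      · have hya : y ≠ a := ne_of_gt hxy
        rw [Equiv.swap_apply_left, Equiv.swap_apply_of_ne_of_ne hya hyb]
        exact lt_trans hinv hw
    · by_cases hxb : x = b
      · exfalso; obtain rfl := hxb.symm
        have hya : y ≠ a := fun h => absurd (h ▸ hxy) (not_lt.2 (le_of_lt hab))
        have hyb : y ≠ b := ne_of_gt hxy
        rw [Equiv.swap_apply_right, Equiv.swap_apply_of_ne_of_ne hya hyb] at h1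
        exact h1 (lt_trans hab hxy)
      · have hsx : Equiv.swap a b x = x := Equiv.swap_apply_of_ne_of_ne hxa hxb
        by_cases hya : y = a
        · exfalso; obtain rfl := hya.symm
          rw [hsx, Equiv.swap_apply_left] at h1
          exact h1 (lt_trans hxy hab)
        · by_cases hyb : y = b
          · obtain rfl := hyb.symm
            rw [hsx, Equiv.swap_apply_right]
            exact lt_trans hw hinv
          · exfalso
            rw [hsx, Equiv.swap_apply_of_ne_of_ne hya hyb] at h1
            exact h1 hxy

lemma swap_self_ne {n : ℕ} {a b : Fin n} (hab : a < b) : a ≠ b := ne_of_lt hab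

lemma plen_swap_asc_ge {n : ℕ} (a b : Fin n) (hab : a < b) (w : Equiv.Perm (Fin n))
    (hw : w a < w b) : plen w + 1 ≤ plen (w * Equiv.swap a b) := by
  have hss : ∀ z, Equiv.swap a b (Equiv.swap a b z) = z :=
    fun z => Equiv.swap_apply_self a b z
  have hab_not : (a, b) ∉ invS w := by
    rw [mem_invS]
    rintro ⟨-, h⟩
    exact absurd hw (not_lt.2 (le_of_lt h))
  have hcard : (insert (a, b) (invS w)).card = plen w + 1 := by
    rw [Finset.card_insert_of_notMem hab_not, plen_eq]
  rw [← hcard, plen_eq]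
  apply Finset.card_le_card_of_injOn (psi (Equiv.swap a b))
  · intro p hp
    rcases Finset.mem_insert.1 hp with rfl | hp'
    · unfold psi
      rw [if_neg]
      · rw [Finset.mem_coe, mem_invS]
        refine ⟨hab, ?_⟩
        simp only [Equiv.Perm.mul_apply, Equiv.swap_apply_left, Equiv.swap_apply_right]
        exact hw
      · simp only [Equiv.swap_apply_left, Equiv.swap_apply_right]
        exact not_lt.2 (le_of_lt hab)
    · exact psi_maps_asc a b hab w hw hp'
  · intro p hp q hq h
    have hp1 : p.1 < p.2 := by
      rcases Finset.mem_insert.1 hp with rfl | hp' <;> [exact hab; exact ((mem_invS w p).1 hp').1]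
    have hq1 : q.1 < q.2 := by
      rcases Finset.mem_insert.1 hq with rfl | hq' <;> [exact hab; exact ((mem_invS w q).1 hq').1]
    exact psi_inj (Equiv.swap a b) hss hp1 hq1 h

lemma swap_swap_cancel {n : ℕ} (w : Equiv.Perm (Fin n)) (a b : Fin n) :
    w * Equiv.swap a b * Equiv.swap a b = w := by
  rw [mul_assoc, Equiv.swap_mul_self, mul_one]

lemma plen_swap_desc_lt {n : ℕ} (a b : Fin n) (hab : a < b) (w : Equiv.Perm (Fin n))
    (hw : w b < w a) : plen (w * Equiv.swap a b) < plen w := by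
  have h1 : (w * Equiv.swap a b) a < (w * Equiv.swap a b) b := by
    simp only [Equiv.Perm.mul_apply, Equiv.swap_apply_left, Equiv.swap_apply_right]
    exact hw
  have := plen_swap_asc_ge a b hab (w * Equiv.swap a b) h1
  rw [swap_swap_cancel] at this
  omega

lemma plen_swap_asc_le {n : ℕ} (a b : Fin n) (hab : a < b) (w : Equiv.Perm (Fin n))
    (hw : w a < w b)
    (H : ∀ c : Fin n, a < c → c < b → w a < w c → w c < w b → False) :
    plen (w * Equiv.swap a b) ≤ plen w + 1 := by
  have hss : ∀ z, Equiv.swap a b (Equiv.swap a b z) = z :=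
    fun z => Equiv.swap_apply_self a b z
  have hab_not : (a, b) ∉ invS w := by
    rw [mem_invS]
    rintro ⟨-, h⟩
    exact absurd hw (not_lt.2 (le_of_lt h))
  have hcard : (insert (a, b) (invS w)).card = plen w + 1 := by
    rw [Finset.card_insert_of_notMem hab_not, plen_eq]
  rw [← hcard, plen_eq]
  apply Finset.card_le_card_of_injOn (psi (Equiv.swap a b))
  · intro p hp
    obtain ⟨x, y⟩ := p
    rw [Finset.mem_coe, mem_invS] at hp
    obtain ⟨hxy, hinv⟩ := hp
    simp only [Equiv.Perm.mul_apply] at hinv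
    unfold psi
    split_ifs with h1
    · exact Finset.mem_insert_of_mem (by rw [mem_invS]; exact ⟨h1, hinv⟩)
    · by_cases hxa : x = a
      · obtain rfl := hxa.symm
        by_cases hyb : y = b
        · obtain rfl := hyb.symm
          exact Finset.mem_insert_self _ _
        · have hya : y ≠ a := ne_of_gt hxy
          rw [Equiv.swap_apply_left, Equiv.swap_apply_of_ne_of_ne hya hyb] at hinv h1
          have hyltb : y < b := lt_of_le_of_ne (not_lt.1 h1) hyb
          apply Finset.mem_insert_of_mem
          rw [mem_invS]
          refine ⟨hxy, ?_⟩
          rcases lt_trichotomy (w y) (w a) with h | h | h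
          · exact h
          · exact absurd (w.injective h) hya
          · exact absurd (H y hxy hyltb h hinv) not_false
      · by_cases hxb : x = b
        · exfalso
          obtain rfl := hxb.symm
          have hya : y ≠ a := fun h => absurd (h ▸ hxy) (not_lt.2 (le_of_lt hab))
          have hyb : y ≠ b := ne_of_gt hxy
          rw [Equiv.swap_apply_right, Equiv.swap_apply_of_ne_of_ne hya hyb] at h1
          exact h1 (lt_trans hab hxy)
        · have hsx : Equiv.swap a b x = x := Equiv.swap_apply_of_ne_of_ne hxa hxb
          by_cases hya : y = a
          · exfalso
            obtain rfl := hya.symm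
            rw [hsx, Equiv.swap_apply_left] at h1
            exact h1 (lt_trans hxy hab)
          · by_cases hyb : y = b
            · obtain rfl := hyb.symm
              rw [hsx, Equiv.swap_apply_right] at hinv h1
              have haltx : a < x := lt_of_le_of_ne (not_lt.1 h1) (Ne.symm hxa)
              apply Finset.mem_insert_of_mem
              rw [mem_invS]
              refine ⟨hxy, ?_⟩
              rcases lt_trichotomy (w x) (w b) with h | h | h
              · exact absurd (H x haltx hxy hinv h) not_false
              · exact absurd (w.injective h) hxb
              · exact h
            · exfalso
              rw [hsx, Equiv.swap_apply_of_ne_of_ne hya hyb] at h1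
              exact h1 hxy
  · intro p hp q hq h
    have hp1 : p.1 < p.2 := ((mem_invS _ p).1 hp).1
    have hq1 : q.1 < q.2 := ((mem_invS _ q).1 hq).1
    exact psi_inj (Equiv.swap a b) hss hp1 hq1 h

lemma plen_swap_asc_eq {n : ℕ} (a b : Fin n) (hab : a < b) (w : Equiv.Perm (Fin n))
    (hw : w a < w b)
    (H : ∀ c : Fin n, a < c → c < b → w a < w c → w c < w b → False) :
    plen (w * Equiv.swap a b) = plen w + 1 :=
  le_antisymm (plen_swap_asc_le a b hab w hw H) (plen_swap_asc_ge a b hab w hw)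

lemma plen_swap_two_ge {n : ℕ} (a c b : Fin n) (hac : a < c) (hcb : c < b)
    (w : Equiv.Perm (Fin n)) (h1 : w a < w c) (h2 : w c < w b) :
    plen w + 2 ≤ plen (w * Equiv.swap a b) := by
  have hab : a < b := lt_trans hac hcb
  have hw : w a < w b := lt_trans h1 h2
  have hss : ∀ z, Equiv.swap a b (Equiv.swap a b z) = z :=
    fun z => Equiv.swap_apply_self a b z
  have hac_not : (a, c) ∉ invS w := by
    rw [mem_invS]; rintro ⟨-, h⟩; exact absurd h1 (not_lt.2 (le_of_lt h))
  have hab_not : (a, b) ∉ insert (a, c) (invS w) := by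
    rw [Finset.mem_insert]
    rintro (h | h)
    · exact absurd (congrArg Prod.snd h) (ne_of_gt hcb)
    · rw [mem_invS] at h; exact absurd hw (not_lt.2 (le_of_lt h.2))
  have hcard : (insert (a, b) (insert (a, c) (invS w))).card = plen w + 2 := by
    rw [Finset.card_insert_of_notMem hab_not, Finset.card_insert_of_notMem hac_not, plen_eq]
  rw [← hcard, plen_eq]
  apply Finset.card_le_card_of_injOn (psi (Equiv.swap a b))
  · intro p hp
    rcases Finset.mem_insert.1 hp with rfl | hp'
    · unfold psi
      rw [if_neg]
      · rw [Finset.mem_coe, mem_invS]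
        refine ⟨hab, ?_⟩
        simp only [Equiv.Perm.mul_apply, Equiv.swap_apply_left, Equiv.swap_apply_right]
        exact hw
      · simp only [Equiv.swap_apply_left, Equiv.swap_apply_right]
        exact not_lt.2 (le_of_lt hab)
    · rcases Finset.mem_insert.1 hp' with rfl | hp''
      · unfold psi
        have hca : c ≠ a := Ne.symm (ne_of_lt hac)
        have hcbne : c ≠ b := ne_of_lt hcb
        rw [if_neg]
        · rw [Finset.mem_coe, mem_invS]
          refine ⟨hac, ?_⟩
          simp only [Equiv.Perm.mul_apply, Equiv.swap_apply_left,
            Equiv.swap_apply_of_ne_of_ne hca hcbne]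
          exact h2
        · simp only [Equiv.swap_apply_left, Equiv.swap_apply_of_ne_of_ne hca hcbne]
          exact not_lt.2 (le_of_lt hcb)
      · exact psi_maps_asc a b hab w hw hp''
  · intro p hp q hq h
    have hmem : ∀ r : Fin n × Fin n, r ∈ insert (a, b) (insert (a, c) (invS w)) → r.1 < r.2 := by
      intro r hr
      rcases Finset.mem_insert.1 hr with rfl | hr'
      · exact hab
      · rcases Finset.mem_insert.1 hr' with rfl | hr''
        · exact hac
        · exact ((mem_invS w r).1 hr'').1
    exact psi_inj (Equiv.swap a b) hss (hmem p hp) (hmem q hq) h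
theorem stmt12 (n : ℕ) (w : Equiv.Perm (Fin n)) (hw : 0 < plen w)
    (k₀ : Fin n) (hk : pcode w k₀ ≠ 0) (hmin : ∀ i : Fin n, i < k₀ → pcode w i = 0)
    (j₀ : Fin n) (hj : k₀ < j₀) (hval : (w k₀ : ℕ) = (w j₀ : ℕ) + 1) :
    plen (w * Equiv.swap k₀ j₀) = plen w - 1 ∧
    (∀ j : Fin n, k₀ < j → j ≠ j₀ →
        plen (w * Equiv.swap k₀ j₀ * Equiv.swap k₀ j)
          = plen (w * Equiv.swap k₀ j₀) + 1 →
        (w k₀ : ℕ) < ((w * Equiv.swap k₀ j₀ * Equiv.swap k₀ j) k₀ : ℕ) ∧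
        pcode w k₀ < pcode (w * Equiv.swap k₀ j₀ * Equiv.swap k₀ j) k₀ ∧
        (∀ i : Fin n, i < k₀ →
          pcode (w * Equiv.swap k₀ j₀ * Equiv.swap k₀ j) i = 0)) ∧
    (∀ hpos : 0 < (k₀ : ℕ),
        plen (w * Equiv.swap k₀ j₀ *
            Equiv.swap (⟨(k₀ : ℕ) - 1, by have := k₀.isLt; omega⟩ : Fin n) k₀)
          = plen w ∧
        (∀ j : Fin n, j < k₀ →
          plen (w * Equiv.swap k₀ j₀ * Equiv.swap j k₀)
            = plen (w * Equiv.swap k₀ j₀) + 1 →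
          w * Equiv.swap k₀ j₀ * Equiv.swap j k₀ =
            w * Equiv.swap k₀ j₀ *
              Equiv.swap (⟨(k₀ : ℕ) - 1, by have := k₀.isLt; omega⟩ : Fin n) k₀)) := by
  classical
  have wfix : ∀ i : Fin n, i < k₀ → w i = i := fix_below w k₀ hmin
  have hcode : (w k₀ : ℕ) = (k₀ : ℕ) + pcode w k₀ := pcode_of_fix w k₀ wfix
  have hwk : (k₀ : ℕ) < (w k₀ : ℕ) := by omega
  set v := w * Equiv.swap k₀ j₀ with hv
  have hkj : k₀ ≠ j₀ := ne_of_lt hj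
  have hvk : v k₀ = w j₀ := by
    rw [hv]; simp [Equiv.Perm.mul_apply, Equiv.swap_apply_left]
  have hvj : v j₀ = w k₀ := by
    rw [hv]; simp [Equiv.Perm.mul_apply, Equiv.swap_apply_right]
  have hvx : ∀ x : Fin n, x ≠ k₀ → x ≠ j₀ → v x = w x := by
    intro x h1 h2
    rw [hv]; simp [Equiv.Perm.mul_apply, Equiv.swap_apply_of_ne_of_ne h1 h2]
  have hvasc : v k₀ < v j₀ := by
    rw [hvk, hvj]; exact Fin.lt_def.2 (by omega)
  have part1 : plen w = plen v + 1 := by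
    have H : ∀ c : Fin n, k₀ < c → c < j₀ → v k₀ < v c → v c < v j₀ → False := by
      intro c h1 h2 h3 h4
      rw [hvk] at h3; rw [hvj] at h4
      have := Fin.lt_def.1 h3; have := Fin.lt_def.1 h4
      omega
    have := plen_swap_asc_eq k₀ j₀ hj v hvasc H
    rwa [hv, swap_swap_cancel] at this
  refine ⟨by omega, ?_, ?_⟩
  · -- part 2
    intro j hjgt hjne h1
    have hjk : j ≠ k₀ := Ne.symm (ne_of_lt hjgt)
    have hvjj : v j = w j := hvx j hjk hjne
    have hgt : v k₀ < v j := by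
      rcases lt_trichotomy (v j) (v k₀) with h | h | h
      · exfalso
        have := plen_swap_desc_lt k₀ j hjgt v h
        omega
      · exact absurd (v.injective h) hjk
      · exact h
    have happ : (v * Equiv.swap k₀ j) k₀ = w j := by
      rw [← hvjj]
      simp [Equiv.Perm.mul_apply, Equiv.swap_apply_left]
    have hjval : (w k₀ : ℕ) < (w j : ℕ) := by
      have hne : (w j : ℕ) ≠ (w k₀ : ℕ) := fun h => hjk (w.injective (Fin.ext h))
      rw [hvk, hvjj] at hgt
      have := Fin.lt_def.1 hgt
      omega
    have wfix' : ∀ i : Fin n, i < k₀ → (v * Equiv.swap k₀ j) i = i := by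
      intro i hi
      have hik : i ≠ k₀ := ne_of_lt hi
      have hij : i ≠ j := ne_of_lt (lt_trans hi hjgt)
      have hij₀ : i ≠ j₀ := ne_of_lt (lt_trans hi hj)
      rw [Equiv.Perm.mul_apply, Equiv.swap_apply_of_ne_of_ne hik hij, hvx i hik hij₀]
      exact wfix i hi
    have hcode' := pcode_of_fix (v * Equiv.swap k₀ j) k₀ wfix'
    rw [happ] at hcode'
    refine ⟨by rw [happ]; exact hjval, by omega, ?_⟩
    intro i hi
    exact pcode_zero_of_fix _ k₀ wfix' i hi
  · -- part 3
    intro hpos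
    have hk0 := k₀.isLt
    set a : Fin n := ⟨(k₀ : ℕ) - 1, by omega⟩ with ha
    have hav : (a : ℕ) = (k₀ : ℕ) - 1 := rfl
    have hak : a < k₀ := Fin.lt_def.2 (by omega)
    have hakne : a ≠ k₀ := ne_of_lt hak
    have haj : a ≠ j₀ := ne_of_lt (lt_trans hak hj)
    have hva : v a = a := by rw [hvx a hakne haj]; exact wfix a hak
    have hvak : v a < v k₀ := by
      rw [hva, hvk]
      exact Fin.lt_def.2 (by omega)
    have part3a : plen (v * Equiv.swap a k₀) = plen v + 1 := by
      apply plen_swap_asc_eq a k₀ hak v hvak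
      intro c hc1 hc2 _ _
      have := Fin.lt_def.1 hc1; have := Fin.lt_def.1 hc2
      omega
    constructor
    · show plen (v * Equiv.swap a k₀) = plen w
      omega
    · intro j hjlt h2
      have hja : j = a := by
        apply Fin.ext
        rw [hav]
        have hjv : (j : ℕ) < (k₀ : ℕ) := Fin.lt_def.1 hjlt
        by_contra hne
        have hjlt' : (j : ℕ) < (k₀ : ℕ) - 1 := by omega
        have hj_a : j < a := Fin.lt_def.2 (by omega)
        have hjk : j ≠ k₀ := ne_of_lt hjlt
        have hjj₀ : j ≠ j₀ := ne_of_lt (lt_trans hjlt hj)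
        have hvjlt : v j < v a := by
          rw [hvx j hjk hjj₀, wfix j hjlt, hva]
          exact hj_a
        have := plen_swap_two_ge j a k₀ hj_a hak v hvjlt hvak
        omega
      rw [hja]
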